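/- arXiv:2112.15392 — 3 statements merged into one kernel-verified Lean document; each statement's English description precedes it below -/
import Mathlib

section
/- Let f: ℝ^d → ℝ be differentiable with L-Lipschitz gradient and with inf f > -∞. Then for any η ∈ (0, 2/L), the gradient descent iterates w_{n+1} = w_n - η∇f(w_n) satisfy ‖∇f(w_n)‖ → 0 as n → ∞. -/
open RealInnerProductSpace Filter

lemma grad_hasDerivAt {d : ℕ} (f : EuclideanSpace ℝ (Fin d) → ℝ)
    (hdiff : Differentiable ℝ f) (x v : EuclideanSpace ℝ (Fin d)) (t : ℝ) :
    HasDerivAt (fun s : ℝ => f (x + s • v)) ⟪gradient f (x + t • v), v⟫ t := by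
  have h1 : HasDerivAt (fun s : ℝ => x + s • v) v t := by
    simpa using ((hasDerivAt_id t).smul_const v).const_add x
  have h2 := ((hdiff (x + t • v)).hasGradientAt.hasFDerivAt).comp_hasDerivAt t h1
  simpa [InnerProductSpace.toDual_apply_apply, Function.comp_def] using h2

lemma descent_lemma {d : ℕ} (f : EuclideanSpace ℝ (Fin d) → ℝ) (L : ℝ) (hL : 0 < L)
    (hdiff : Differentiable ℝ f)
    (hlip : LipschitzWith (Real.toNNReal L) (gradient f))
    (x v : EuclideanSpace ℝ (Fin d)) :
    f (x + v) ≤ f x + ⟪gradient f x, v⟫ + L / 2 * ‖v‖ ^ 2 := by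
  set g : ℝ → ℝ := fun t => f (x + t • v) - t * ⟪gradient f x, v⟫ - L / 2 * ‖v‖ ^ 2 * t ^ 2
    with hg
  have hder : ∀ t : ℝ, HasDerivAt g
      (⟪gradient f (x + t • v), v⟫ - ⟪gradient f x, v⟫ - L * ‖v‖ ^ 2 * t) t := by
    intro t
    have h1 := grad_hasDerivAt f hdiff x v t
    have h2 : HasDerivAt (fun s : ℝ => s * ⟪gradient f x, v⟫) ⟪gradient f x, v⟫ t := by
      simpa using (hasDerivAt_id t).mul_const ⟪gradient f x, v⟫
    have h3 : HasDerivAt (fun s : ℝ => L / 2 * ‖v‖ ^ 2 * s ^ 2) (L * ‖v‖ ^ 2 * t) t := by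
      have := (hasDerivAt_pow 2 t).const_mul (L / 2 * ‖v‖ ^ 2)
      convert this using 1
      · rfl
      · rfl
      norm_num
      ring
    exact (h1.sub h2).sub h3
  have hanti : AntitoneOn g (Set.Icc 0 1) := by
    apply antitoneOn_of_deriv_nonpos (convex_Icc 0 1)
    · exact fun t _ => (hder t).continuousAt.continuousWithinAt
    · exact fun t _ => ((hder t).differentiableAt).differentiableWithinAt
    · intro t ht
      rw [interior_Icc] at ht
      rw [(hder t).deriv]
      have hineq : ⟪gradient f (x + t • v) - gradient f x, v⟫ ≤ L * ‖v‖ ^ 2 * t := by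
        calc ⟪gradient f (x + t • v) - gradient f x, v⟫
            ≤ ‖gradient f (x + t • v) - gradient f x‖ * ‖v‖ := real_inner_le_norm _ _
          _ ≤ L * ‖t • v‖ * ‖v‖ := by
              have := hlip.dist_le_mul (x + t • v) x
              rw [Real.coe_toNNReal L hL.le] at this
              have h' : dist (x + t • v) x = ‖t • v‖ := by
                rw [dist_eq_norm]; congr 1; abel
              rw [dist_eq_norm, h'] at this
              exact mul_le_mul_of_nonneg_right this (norm_nonneg v)
          _ = L * ‖v‖ ^ 2 * t := by
              rw [norm_smul, Real.norm_eq_abs, abs_of_pos ht.1]; ring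
      rw [inner_sub_left] at hineq
      linarith
  have := hanti (Set.left_mem_Icc.2 zero_le_one) (Set.right_mem_Icc.2 zero_le_one) zero_le_one
  simp only [hg, zero_smul, add_zero, one_smul, one_pow, mul_one, zero_mul, sub_zero,
    zero_pow, mul_zero] at this
  linarith

theorem stmt_4 {d : ℕ} (f : EuclideanSpace ℝ (Fin d) → ℝ) (L η : ℝ) (hL : 0 < L)
    (hdiff : Differentiable ℝ f)
    (hlip : LipschitzWith (Real.toNNReal L) (gradient f))
    (hbdd : BddBelow (Set.range f))
    (hη0 : 0 < η) (hη2 : η < 2 / L)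
    (w : ℕ → EuclideanSpace ℝ (Fin d))
    (hrec : ∀ n, w (n + 1) = w n - η • gradient f (w n)) :
    Tendsto (fun n => ‖gradient f (w n)‖) atTop (nhds 0) := by
  set c : ℝ := η - L / 2 * η ^ 2 with hc
  have hcpos : 0 < c := by
    have : L * η < 2 := by
      rw [lt_div_iff₀ hL] at hη2; linarith
    rw [hc]; nlinarith
  set g : ℕ → ℝ := fun n => ‖gradient f (w n)‖ ^ 2 with hgdef
  have hgnn : ∀ n, 0 ≤ g n := fun n => sq_nonneg _
  -- one step descent
  have hstep : ∀ n, f (w (n + 1)) ≤ f (w n) - c * g n := by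
    intro n
    have := descent_lemma f L hL hdiff hlip (w n) (-(η • gradient f (w n)))
    have hrw : w n + -(η • gradient f (w n)) = w (n + 1) := by
      rw [hrec n]; abel
    rw [hrw] at this
    have hin : ⟪gradient f (w n), -(η • gradient f (w n))⟫ = -(η * g n) := by
      rw [inner_neg_right, real_inner_smul_right, real_inner_self_eq_norm_sq]
    have hnorm : ‖-(η • gradient f (w n))‖ ^ 2 = η ^ 2 * g n := by
      rw [norm_neg, norm_smul, Real.norm_eq_abs, abs_of_pos hη0, mul_pow]
    rw [hin, hnorm] at this
    have : f (w (n + 1)) ≤ f (w n) - η * g n + L / 2 * (η ^ 2 * g n) := by linarith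
    calc f (w (n + 1)) ≤ f (w n) - η * g n + L / 2 * (η ^ 2 * g n) := this
      _ = f (w n) - c * g n := by rw [hc]; ring
  obtain ⟨B, hB⟩ := hbdd
  have hBle : ∀ y, B ≤ f y := fun y => hB ⟨y, rfl⟩
  -- partial sums bounded
  have hsum : ∀ n, f (w n) + c * ∑ k ∈ Finset.range n, g k ≤ f (w 0) := by
    intro n
    induction n with
    | zero => simp
    | succ n ih =>
      rw [Finset.sum_range_succ]
      have := hstep n
      linarith
  have hbound : ∀ n, ∑ k ∈ Finset.range n, g k ≤ (f (w 0) - B) / c := by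
    intro n
    rw [le_div_iff₀ hcpos]
    have := hsum n
    have := hBle (w n)
    linarith [mul_comm c (∑ k ∈ Finset.range n, g k)]
  have hsummable : Summable g := summable_of_sum_range_le hgnn hbound
  have hg0 : Tendsto g atTop (nhds 0) := hsummable.tendsto_atTop_zero
  have := (Real.continuous_sqrt.tendsto 0).comp hg0
  simp only [Real.sqrt_zero] at this
  refine this.congr fun n => ?_
  simp [hgdef, Function.comp, Real.sqrt_sq (norm_nonneg _)]
end

section
/- Let f: ℝ^d → ℝ be convex and differentiable with L-Lipschitz gradient, with unique minimizer w*. Then the gradient descent iterates with step size η = 1/L satisfy f(w_n) - f(w*) ≤ 2L‖w_0 - w*‖² / (4 + n) for all n ≥ 0. -/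
open RealInnerProductSpace

lemma aux_hasDerivAt {d : ℕ} {f : EuclideanSpace ℝ (Fin d) → ℝ}
    (hdiff : Differentiable ℝ f) (x v : EuclideanSpace ℝ (Fin d)) (t : ℝ) :
    HasDerivAt (fun s : ℝ => f (x + s • v)) ⟪gradient f (x + t • v), v⟫ t := by
  have h1 : HasDerivAt (fun s : ℝ => x + s • v) v t := by
    simpa using ((hasDerivAt_id t).smul_const v).const_add x
  have h2 : HasFDerivAt f
      ((InnerProductSpace.toDual ℝ _) (gradient f (x + t • v))) (x + t • v) :=
    hasGradientAt_iff_hasFDerivAt.mp (hdiff _).hasGradientAt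
  have h3 := h2.comp_hasDerivAt t h1
  simp only [InnerProductSpace.toDual_apply_apply] at h3
  exact h3

lemma aux_convex_ineq {d : ℕ} {f : EuclideanSpace ℝ (Fin d) → ℝ}
    (hconv : ConvexOn ℝ Set.univ f) (hdiff : Differentiable ℝ f)
    (x y : EuclideanSpace ℝ (Fin d)) :
    f x + ⟪gradient f x, y - x⟫ ≤ f y := by
  have hφ : ConvexOn ℝ Set.univ (fun t : ℝ => f (x + t • (y - x))) := by
    have h := hconv.comp_affineMap (AffineMap.lineMap x y)
    have he : (fun t : ℝ => f (x + t • (y - x))) = f ∘ (AffineMap.lineMap x y) := by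
      funext t
      simp [AffineMap.lineMap_apply, add_comm]
    rw [he]
    simpa using h
  have hd0 := aux_hasDerivAt hdiff x (y - x) 0
  rw [zero_smul, add_zero] at hd0
  have hslope := hφ.le_slope_of_hasDerivAt (Set.mem_univ (0:ℝ)) (Set.mem_univ (1:ℝ))
    one_pos hd0
  have h1 : x + (1:ℝ) • (y - x) = y := by rw [one_smul]; abel
  have h0 : x + (0:ℝ) • (y - x) = x := by rw [zero_smul, add_zero]
  simp only [slope_def_field, h1, h0, sub_zero, div_one] at hslope
  linarith

lemma aux_descent {d : ℕ} {f : EuclideanSpace ℝ (Fin d) → ℝ} {L : ℝ} (hL : 0 < L)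
    (hdiff : Differentiable ℝ f)
    (hlip : LipschitzWith (Real.toNNReal L) (gradient f))
    (x y : EuclideanSpace ℝ (Fin d)) :
    f y ≤ f x + ⟪gradient f x, y - x⟫ + L / 2 * ‖y - x‖ ^ 2 := by
  set v := y - x with hv
  have hcont : Continuous fun t : ℝ => ⟪gradient f (x + t • v), v⟫ :=
    (hlip.continuous.comp (continuous_const.add (continuous_id.smul continuous_const))).inner continuous_const
  have hderiv : ∀ t ∈ Set.uIcc (0:ℝ) 1,
      HasDerivAt (fun s : ℝ => f (x + s • v)) ⟪gradient f (x + t • v), v⟫ t :=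
    fun t _ => aux_hasDerivAt hdiff x v t
  have hint : IntervalIntegrable (fun t : ℝ => ⟪gradient f (x + t • v), v⟫)
      MeasureTheory.volume 0 1 := hcont.intervalIntegrable 0 1
  have heq : ∫ t in (0:ℝ)..1, ⟪gradient f (x + t • v), v⟫ = f y - f x := by
    rw [intervalIntegral.integral_eq_sub_of_hasDerivAt hderiv hint]
    have h1 : x + (1:ℝ) • v = y := by rw [one_smul, hv]; abel
    have h0 : x + (0:ℝ) • v = x := by rw [zero_smul, add_zero]
    rw [h1, h0]
  have hcont2 : Continuous fun t : ℝ => ⟪gradient f x, v⟫ + L * ‖v‖ ^ 2 * t := by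
    fun_prop
  have hint2 : IntervalIntegrable (fun t : ℝ => ⟪gradient f x, v⟫ + L * ‖v‖ ^ 2 * t)
      MeasureTheory.volume 0 1 := hcont2.intervalIntegrable 0 1
  have hmono : ∀ t ∈ Set.Icc (0:ℝ) 1,
      ⟪gradient f (x + t • v), v⟫ ≤ ⟪gradient f x, v⟫ + L * ‖v‖ ^ 2 * t := by
    intro t ht
    have h1 : ⟪gradient f (x + t • v) - gradient f x, v⟫
        ≤ ‖gradient f (x + t • v) - gradient f x‖ * ‖v‖ := real_inner_le_norm _ _
    have h2 : ‖gradient f (x + t • v) - gradient f x‖ ≤ L * (t * ‖v‖) := by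
      have hd := hlip.dist_le_mul (x + t • v) x
      rw [dist_eq_norm, dist_eq_norm] at hd
      have hc : ((Real.toNNReal L : NNReal) : ℝ) = L := Real.coe_toNNReal L hL.le
      rw [hc] at hd
      have he : x + t • v - x = t • v := by abel
      rw [he, norm_smul, Real.norm_eq_abs, abs_of_nonneg ht.1] at hd
      linarith [hd]
    have h3 : ⟪gradient f (x + t • v), v⟫
        = ⟪gradient f x, v⟫ + ⟪gradient f (x + t • v) - gradient f x, v⟫ := by
      rw [inner_sub_left]; ring
    have h4 : ‖gradient f (x + t • v) - gradient f x‖ * ‖v‖ ≤ L * (t * ‖v‖) * ‖v‖ :=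
      mul_le_mul_of_nonneg_right h2 (norm_nonneg _)
    rw [h3]
    nlinarith [h1, h4]
  have hcalc : ∫ t in (0:ℝ)..1, (⟪gradient f x, v⟫ + L * ‖v‖ ^ 2 * t)
      = ⟪gradient f x, v⟫ + L / 2 * ‖v‖ ^ 2 := by
    rw [intervalIntegral.integral_add (intervalIntegrable_const)
      ((Continuous.intervalIntegrable (by fun_prop : Continuous fun t : ℝ => L * ‖v‖ ^ 2 * t) 0 1)),
      intervalIntegral.integral_const, intervalIntegral.integral_const_mul]
    simp
    ring
  have hle := intervalIntegral.integral_mono_on zero_le_one hint hint2 hmono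
  rw [heq, hcalc] at hle
  linarith

lemma aux_step {d : ℕ} {f : EuclideanSpace ℝ (Fin d) → ℝ} {L : ℝ} (hL : 0 < L)
    (hdiff : Differentiable ℝ f)
    (hlip : LipschitzWith (Real.toNNReal L) (gradient f))
    (x : EuclideanSpace ℝ (Fin d)) :
    f (x - (1 / L) • gradient f x) ≤ f x - 1 / (2 * L) * ‖gradient f x‖ ^ 2 := by
  have hd := aux_descent hL hdiff hlip x (x - (1 / L) • gradient f x)
  have h1 : x - (1 / L) • gradient f x - x = -((1 / L) • gradient f x) := by abel
  rw [h1, inner_neg_right, real_inner_smul_right, real_inner_self_eq_norm_sq,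
    norm_neg, norm_smul, Real.norm_eq_abs, abs_of_pos (by positivity : (0:ℝ) < 1 / L)] at hd
  have h2 : L / 2 * (1 / L * ‖gradient f x‖) ^ 2 = 1 / (2 * L) * ‖gradient f x‖ ^ 2 := by
    field_simp
  rw [h2] at hd
  have h3 : 1 / L * ‖gradient f x‖ ^ 2 = 2 * (1 / (2 * L) * ‖gradient f x‖ ^ 2) := by
    field_simp
  linarith [hd]

set_option maxHeartbeats 1000000 in
theorem stmt_10 {d : ℕ} (f : EuclideanSpace ℝ (Fin d) → ℝ) (L : ℝ) (hL : 0 < L)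
    (hconv : ConvexOn ℝ Set.univ f)
    (hdiff : Differentiable ℝ f)
    (hlip : LipschitzWith (Real.toNNReal L) (gradient f))
    (wstar : EuclideanSpace ℝ (Fin d)) (hmin : ∀ w, f wstar ≤ f w)
    (huniq : ∀ w, f w ≤ f wstar → w = wstar)
    (w : ℕ → EuclideanSpace ℝ (Fin d))
    (hrec : ∀ n, w (n + 1) = w n - (1 / L) • gradient f (w n)) :
    ∀ n : ℕ, f (w n) - f wstar ≤ 2 * L * ‖w 0 - wstar‖ ^ 2 / (4 + n) := by
  -- gradient at minimizer is zero
  have hgstar : gradient f wstar = 0 := by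
    have h1 := aux_step hL hdiff hlip wstar
    have h2 := hmin (wstar - (1 / L) • gradient f wstar)
    have h5 : 1 / (2 * L) * ‖gradient f wstar‖ ^ 2 ≤ 0 := by linarith
    have hpos : (0:ℝ) < 1 / (2 * L) := by positivity
    have h3 : ‖gradient f wstar‖ ^ 2 ≤ 0 := by nlinarith [h5, hpos]
    have h4 : ‖gradient f wstar‖ = 0 := by nlinarith [norm_nonneg (gradient f wstar)]
    exact norm_eq_zero.mp h4
  rcases eq_or_lt_of_le (norm_nonneg (w 0 - wstar)) with hR0 | hR0
  · -- w 0 = wstar : everything is trivial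
    have h0 : w 0 = wstar := by rw [← sub_eq_zero]; exact norm_eq_zero.mp hR0.symm
    have hall : ∀ n, w n = wstar := by
      intro n; induction n with
      | zero => exact h0
      | succ k ih => rw [hrec k, ih, hgstar, smul_zero, sub_zero]
    intro n
    rw [hall n, sub_self, h0, sub_self, norm_zero]
    positivity
  · set R : ℝ := ‖w 0 - wstar‖ with hRdef
    set A : ℝ := 2 * L * R ^ 2 with hAdef
    have hA : 0 < A := by positivity
    set δ : ℕ → ℝ := fun n => f (w n) - f wstar with hδdef
    set g : ℕ → EuclideanSpace ℝ (Fin d) := fun n => gradient f (w n) with hgdef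
    have hδ0 : ∀ n, 0 ≤ δ n := fun n => sub_nonneg.mpr (hmin (w n))
    have hstep : ∀ n, δ (n + 1) ≤ δ n - 1 / (2 * L) * ‖g n‖ ^ 2 := by
      intro n
      have h := aux_step hL hdiff hlip (w n)
      rw [← hrec n] at h
      simp only [hδdef, hgdef]
      linarith
    have hinner : ∀ n, δ n ≤ ⟪g n, w n - wstar⟫ := by
      intro n
      have h := aux_convex_ineq hconv hdiff (w n) wstar
      have h2 : ⟪gradient f (w n), wstar - w n⟫ = -⟪gradient f (w n), w n - wstar⟫ := by
        rw [← inner_neg_right]; congr 1; abel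
      rw [h2] at h
      simp only [hδdef, hgdef]
      linarith
    have hgap : ∀ n, 1 / (2 * L) * ‖g n‖ ^ 2 ≤ δ n := by
      intro n
      have h1 := aux_step hL hdiff hlip (w n)
      have h2 := hmin (w n - (1 / L) • gradient f (w n))
      simp only [hδdef, hgdef]
      linarith
    have hdist : ∀ n, ‖w (n + 1) - wstar‖ ≤ ‖w n - wstar‖ := by
      intro n
      have hexp : w (n + 1) - wstar = (w n - wstar) - (1 / L) • g n := by
        rw [hrec n]; simp only [hgdef]; abel
      have hsq : ‖(w n - wstar) - (1 / L) • g n‖ ^ 2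
          = ‖w n - wstar‖ ^ 2 - 2 * (1 / L * ⟪w n - wstar, g n⟫) + (1 / L) ^ 2 * ‖g n‖ ^ 2 := by
        rw [norm_sub_sq_real, real_inner_smul_right, norm_smul, Real.norm_eq_abs,
          abs_of_pos (by positivity : (0:ℝ) < 1 / L)]
        ring
      have hcomm : ⟪w n - wstar, g n⟫ = ⟪g n, w n - wstar⟫ := real_inner_comm _ _
      have hL2 : 1 / (2 * L) * ‖g n‖ ^ 2 ≤ ⟪g n, w n - wstar⟫ :=
        le_trans (hgap n) (hinner n)
      have hmul := mul_le_mul_of_nonneg_left hL2 (by positivity : (0:ℝ) ≤ 2 * (1 / L))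
      have hkey : 2 * (1 / L) * (1 / (2 * L) * ‖g n‖ ^ 2) = (1 / L) ^ 2 * ‖g n‖ ^ 2 := by
        field_simp
      have hsqle : ‖w (n + 1) - wstar‖ ^ 2 ≤ ‖w n - wstar‖ ^ 2 := by
        rw [hexp, hsq, hcomm]
        nlinarith [hmul, hkey]
      nlinarith [hsqle, norm_nonneg (w (n + 1) - wstar), norm_nonneg (w n - wstar)]
    have hRb : ∀ n, ‖w n - wstar‖ ≤ R := by
      intro n; induction n with
      | zero => simp [hRdef]
      | succ k ih => exact le_trans (hdist k) ih
    have hδle : ∀ n, δ n ≤ ‖g n‖ * R := by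
      intro n
      calc δ n ≤ ⟪g n, w n - wstar⟫ := hinner n
        _ ≤ ‖g n‖ * ‖w n - wstar‖ := real_inner_le_norm _ _
        _ ≤ ‖g n‖ * R := mul_le_mul_of_nonneg_left (hRb n) (norm_nonneg _)
    intro n
    induction n with
    | zero =>
      have h := aux_descent hL hdiff hlip wstar (w 0)
      rw [hgstar] at h
      simp only [inner_zero_left, add_zero] at h
      have hgoal : A / (4 + ((0:ℕ):ℝ)) = L / 2 * R ^ 2 := by
        rw [hAdef]; push_cast; ring
      show f (w 0) - f wstar ≤ A / (4 + ((0:ℕ):ℝ))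
      rw [hgoal]
      linarith [h]
    | succ k ih =>
      have ih2 : δ k ≤ A / (4 + (k:ℝ)) := ih
      have ihA : δ k * (4 + (k:ℝ)) ≤ A :=
        (le_div_iff₀ (by positivity : (0:ℝ) < 4 + (k:ℝ))).mp ih2
      have hgsq : δ k ^ 2 ≤ ‖g k‖ ^ 2 * R ^ 2 := by
        nlinarith [hδle k, hδ0 k, norm_nonneg (g k), hR0]
      have h6 : δ (k + 1) * A ≤ δ k * A - δ k ^ 2 := by
        have hs := hstep k
        have hkey : 1 / (2 * L) * ‖g k‖ ^ 2 * A = ‖g k‖ ^ 2 * R ^ 2 := by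
          rw [hAdef]; field_simp
        have hmulA : δ (k + 1) * A ≤ (δ k - 1 / (2 * L) * ‖g k‖ ^ 2) * A :=
          mul_le_mul_of_nonneg_right hs hA.le
        have hx : (δ k - 1 / (2 * L) * ‖g k‖ ^ 2) * A
            = δ k * A - 1 / (2 * L) * ‖g k‖ ^ 2 * A := by ring
        calc δ (k + 1) * A ≤ (δ k - 1 / (2 * L) * ‖g k‖ ^ 2) * A := hmulA
          _ = δ k * A - 1 / (2 * L) * ‖g k‖ ^ 2 * A := hx
          _ = δ k * A - ‖g k‖ ^ 2 * R ^ 2 := by rw [hkey]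
          _ ≤ δ k * A - δ k ^ 2 := sub_le_sub_left hgsq _
      have hgoal : δ (k + 1) ≤ A / (4 + ((k:ℝ) + 1)) := by
        rw [le_div_iff₀ (by positivity : (0:ℝ) < 4 + ((k:ℝ) + 1))]
        have hsub : 0 ≤ A - (4 + (k:ℝ)) * δ k := by linarith [ihA]
        have hk0 : (0:ℝ) ≤ (k:ℝ) := Nat.cast_nonneg k
        nlinarith [h6, sq_nonneg (A - (4 + (k:ℝ)) * δ k),
          mul_nonneg (mul_nonneg (by linarith : (0:ℝ) ≤ 3 + (k:ℝ)) (hδ0 k)) hsub,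
          sq_nonneg (δ k), mul_le_mul_of_nonneg_left h6 (by linarith : (0:ℝ) ≤ 5 + (k:ℝ)),
          hA, hδ0 (k + 1)]
      show f (w (k + 1)) - f wstar ≤ A / (4 + ((k + 1 : ℕ) : ℝ))
      push_cast
      exact hgoal
end

section
/- Let f: ℝ^d → ℝ be convex and differentiable with L-Lipschitz gradient, with minimizer w*. Then gradient descent with step size η ∈ (0, 2/L) satisfies f(w_n) - f(w*) ≤ 2L‖w_0 - w*‖² / (4 + n L η (2 - L η)) for all n. -/
open RealInnerProductSpace
open InnerProductSpace

variable {F : Type*} [NormedAddCommGroup F] [InnerProductSpace ℝ F] [CompleteSpace F]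

lemma hasDerivAt_line (f : F → ℝ) (hdiff : Differentiable ℝ f) (x v : F) (t : ℝ) :
    HasDerivAt (fun s : ℝ => f (x + s • v)) ⟪gradient f (x + t • v), v⟫ t := by
  have h1 : HasFDerivAt f (toDual ℝ F (gradient f (x + t • v))) (x + t • v) :=
    (hdiff _).hasGradientAt.hasFDerivAt
  have h2 : HasDerivAt (fun s : ℝ => x + s • v) v t := by
    simpa using ((hasDerivAt_id t).smul_const v).const_add x
  exact h1.comp_hasDerivAt t h2

lemma conv_first_order (f : F → ℝ) (hconv : ConvexOn ℝ Set.univ f) (hdiff : Differentiable ℝ f)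
    (x y : F) : f x + ⟪gradient f x, y - x⟫ ≤ f y := by
  have hline := hasDerivAt_line f hdiff x (y - x) 0
  rw [zero_smul, add_zero] at hline
  have hslope : Filter.Tendsto (slope (fun s : ℝ => f (x + s • (y - x))) 0)
      (nhdsWithin 0 (Set.Ioi 0)) (nhds ⟪gradient f x, y - x⟫) :=
    (hasDerivAt_iff_tendsto_slope.mp hline).mono_left
      (nhdsWithin_mono 0 (fun t ht => ne_of_gt ht))
  refine le_of_sub_nonneg ?_
  have key : ∀ᶠ t in nhdsWithin (0:ℝ) (Set.Ioi 0),
      slope (fun s : ℝ => f (x + s • (y - x))) 0 t ≤ f y - f x := by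
    filter_upwards [Ioo_mem_nhdsGT_of_mem (by norm_num : (0:ℝ) ∈ Set.Ico 0 1)] with t ht
    have heq : x + t • (y - x) = (1 - t) • x + t • y := by module
    have hc := hconv.2 (Set.mem_univ x) (Set.mem_univ y) (by linarith [ht.2] : (0:ℝ) ≤ 1 - t)
      ht.1.le (by ring)
    rw [slope_def_field, heq]
    rw [zero_smul, add_zero, sub_zero, div_le_iff₀ ht.1]
    simp only [smul_eq_mul] at hc
    nlinarith [hc]
  have := le_of_tendsto hslope key
  linarith

lemma descent (f : F → ℝ) (L : ℝ) (hL : 0 < L) (hdiff : Differentiable ℝ f)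
    (hlip : ∀ a b : F, ‖gradient f a - gradient f b‖ ≤ L * ‖a - b‖) (x y : F) :
    f y ≤ f x + ⟪gradient f x, y - x⟫ + L / 2 * ‖y - x‖ ^ 2 := by
  set v := y - x with hv
  set c : ℝ := ⟪gradient f x, v⟫ with hc
  set k : ℝ := L / 2 * ‖v‖ ^ 2 with hk
  set ψ : ℝ → ℝ := fun t => f (x + t • v) - t * c - t ^ 2 * k with hψ
  have hψd : ∀ t : ℝ, HasDerivAt ψ (⟪gradient f (x + t • v), v⟫ - c - 2 * t * k) t := by
    intro t
    have h1 := hasDerivAt_line f hdiff x v t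
    have h2 : HasDerivAt (fun s : ℝ => s * c) c t := hasDerivAt_mul_const c
    have h3 : HasDerivAt (fun s : ℝ => s ^ 2 * k) (2 * t * k) t := by
      simpa using (hasDerivAt_pow 2 t).mul_const k
    exact (h1.sub h2).sub h3
  have hanti : AntitoneOn ψ (Set.Icc 0 1) := by
    refine antitoneOn_of_deriv_nonpos (convex_Icc 0 1) ?_ ?_ ?_
    · exact fun t _ => ((hψd t).continuousAt).continuousWithinAt
    · exact fun t _ => ((hψd t).differentiableAt).differentiableWithinAt
    · intro t ht
      rw [interior_Icc] at ht
      rw [(hψd t).deriv]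
      have hinner : ⟪gradient f (x + t • v), v⟫ - c ≤ L * t * ‖v‖ ^ 2 := by
        rw [hc, ← inner_sub_left]
        calc ⟪gradient f (x + t • v) - gradient f x, v⟫ ≤
            ‖gradient f (x + t • v) - gradient f x‖ * ‖v‖ := real_inner_le_norm _ _
          _ ≤ (L * ‖(x + t • v) - x‖) * ‖v‖ := by
              gcongr; exact hlip _ _
          _ = L * t * ‖v‖ ^ 2 := by
              rw [add_sub_cancel_left, norm_smul, Real.norm_eq_abs, abs_of_pos ht.1]; ring
      have h2k : 2 * t * k = L * t * ‖v‖ ^ 2 := by rw [hk]; ring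
      linarith [hinner]
  have h01 := hanti (by norm_num : (0:ℝ) ∈ Set.Icc 0 1) (by norm_num : (1:ℝ) ∈ Set.Icc 0 1)
    (by norm_num)
  simp only [hψ, zero_smul, add_zero, one_smul] at h01
  have hxy : x + v = y := by rw [hv]; abel
  rw [hxy] at h01
  rw [hk, hc] at h01
  linarith [h01]

lemma lower_bound (f : F → ℝ) (L : ℝ) (hL : 0 < L) (hconv : ConvexOn ℝ Set.univ f)
    (hdiff : Differentiable ℝ f)
    (hlip : ∀ a b : F, ‖gradient f a - gradient f b‖ ≤ L * ‖a - b‖) (x y : F) :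
    f x + ⟪gradient f x, y - x⟫ + 1 / (2 * L) * ‖gradient f y - gradient f x‖ ^ 2 ≤ f y := by
  set u : F := gradient f y - gradient f x with hu
  set z : F := y - (1 / L) • u with hz
  have hB := conv_first_order f hconv hdiff x z
  have hC := descent f L hL hdiff hlip y z
  have hzx : z - x = (y - x) - (1 / L) • u := by rw [hz]; abel
  have hzy : z - y = -((1 / L) • u) := by rw [hz]; abel
  have e1 : ⟪gradient f x, z - x⟫ = ⟪gradient f x, y - x⟫ - (1 / L) * ⟪gradient f x, u⟫ := by
    rw [hzx, inner_sub_right, real_inner_smul_right]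
  have e2 : ⟪gradient f y, z - y⟫ = -((1 / L) * ⟪gradient f y, u⟫) := by
    rw [hzy, inner_neg_right, real_inner_smul_right]
  have e3 : ‖z - y‖ ^ 2 = (1 / L) ^ 2 * ‖u‖ ^ 2 := by
    rw [hzy, norm_neg, norm_smul, Real.norm_eq_abs, mul_pow, sq_abs]
  have e4 : ⟪gradient f y, u⟫ - ⟪gradient f x, u⟫ = ‖u‖ ^ 2 := by
    rw [← inner_sub_left, ← hu, real_inner_self_eq_norm_sq]
  rw [e1] at hB
  rw [e2, e3] at hC
  have hL' : L ≠ 0 := ne_of_gt hL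
  have key : (1 / L) * ⟪gradient f y, u⟫ - (1 / L) * ⟪gradient f x, u⟫ -
      L / 2 * ((1 / L) ^ 2 * ‖u‖ ^ 2) = 1 / (2 * L) * ‖u‖ ^ 2 := by
    rw [← mul_sub, e4]
    field_simp
    ring
  linarith [hB, hC, key]

lemma step_arith (L η δ δ' R2 D : ℝ) (hL : 0 < L) (hη : 0 < η) (hηL : L * η < 2)
    (hR2 : 0 < R2) (hD : 4 ≤ D) (hδ'0 : 0 ≤ δ') (hδ0 : 0 ≤ δ)
    (hrec : δ' ≤ δ - (η * (2 - L * η) / 2) * δ ^ 2 / R2)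
    (hδ : δ ≤ 2 * L * R2 / D) :
    δ' ≤ 2 * L * R2 / (D + L * η * (2 - L * η)) := by
  set a : ℝ := L * η * (2 - L * η) with ha_def
  set c : ℝ := η * (2 - L * η) / 2 with hc_def
  have h2Lη : 0 < 2 - L * η := by linarith
  have hc : 0 < c := by rw [hc_def]; exact div_pos (mul_pos hη h2Lη) two_pos
  have ha : 0 < a := by rw [ha_def]; exact mul_pos (mul_pos hL hη) h2Lη
  have hac : a = 2 * L * c := by rw [ha_def, hc_def]; ring
  have ha1 : a ≤ 1 := by rw [ha_def]; nlinarith [sq_nonneg (L * η - 1)]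
  have hD0 : (0:ℝ) < D := by linarith
  have hDa : 0 < D + a := by linarith
  set B : ℝ := 2 * L * R2 / D with hB_def
  have hB0 : 0 < B := by rw [hB_def]; positivity
  have hBD : B * D = 2 * L * R2 := by rw [hB_def]; field_simp
  have hcB : c * (B + δ) ≤ R2 := by
    have h2cB : 2 * (c * B) * D = 2 * a * R2 := by rw [hac]; nlinarith [hBD]
    have : 2 * (c * B) ≤ R2 / 2 := by
      nlinarith [h2cB, mul_pos hc hB0]
    nlinarith [mul_le_mul_of_nonneg_left hδ hc.le]
  have step1 : δ - c * δ ^ 2 / R2 ≤ B - c * B ^ 2 / R2 := by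
    have hkey : 0 ≤ (B - δ) * (R2 - c * (B + δ)) :=
      mul_nonneg (by linarith) (by linarith)
    have hnum : δ * R2 - c * δ ^ 2 ≤ B * R2 - c * B ^ 2 := by nlinarith [hkey]
    have e1 : δ - c * δ ^ 2 / R2 = (δ * R2 - c * δ ^ 2) / R2 := by field_simp
    have e2 : B - c * B ^ 2 / R2 = (B * R2 - c * B ^ 2) / R2 := by field_simp
    rw [e1, e2]
    gcongr
  have step2 : B - c * B ^ 2 / R2 ≤ 2 * L * R2 / (D + a) := by
    have hBe : B - c * B ^ 2 / R2 = 2 * L * R2 * (D - a) / D ^ 2 := by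
      rw [hB_def, hac]; field_simp
    rw [hBe, div_le_div_iff₀ (by positivity) hDa]
    nlinarith [mul_nonneg (mul_nonneg hL.le hR2.le) (sq_nonneg a)]
  linarith

theorem stmt_11 {d : ℕ} (f : EuclideanSpace ℝ (Fin d) → ℝ) (L η : ℝ) (hL : 0 < L)
    (hconv : ConvexOn ℝ Set.univ f)
    (hdiff : Differentiable ℝ f)
    (hlip : LipschitzWith (Real.toNNReal L) (gradient f))
    (wstar : EuclideanSpace ℝ (Fin d)) (hmin : ∀ w, f wstar ≤ f w)
    (hη0 : 0 < η) (hη2 : η < 2 / L)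
    (w : ℕ → EuclideanSpace ℝ (Fin d))
    (hrec : ∀ n, w (n + 1) = w n - η • gradient f (w n)) :
    ∀ n : ℕ, f (w n) - f wstar ≤
      2 * L * ‖w 0 - wstar‖ ^ 2 / (4 + (n : ℝ) * L * η * (2 - L * η)) := by
  have hηL : L * η < 2 := by
    have := (lt_div_iff₀ hL).mp hη2
    linarith
  have h2Lη : 0 < 2 - L * η := by linarith
  have hc : 0 < η * (2 - L * η) / 2 := by positivity
  have hlip' : ∀ a b : EuclideanSpace ℝ (Fin d),
      ‖gradient f a - gradient f b‖ ≤ L * ‖a - b‖ := by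
    intro a b
    have h := hlip.dist_le_mul a b
    rw [dist_eq_norm, dist_eq_norm, Real.coe_toNNReal L hL.le] at h
    exact h
  have hg0 : gradient f wstar = 0 := by
    have hmin' : IsLocalMin f wstar := Filter.Eventually.of_forall (fun z => hmin z)
    have hf0 : fderiv ℝ f wstar = 0 := hmin'.fderiv_eq_zero
    rw [gradient, hf0, map_zero]
  have hδ0 : ∀ n, 0 ≤ f (w n) - f wstar := fun n => sub_nonneg.2 (hmin _)
  have hdesc : ∀ n, f (w (n+1)) ≤ f (w n) - (η * (2 - L * η) / 2) * ‖gradient f (w n)‖ ^ 2 := by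
    intro n
    have h := descent f L hL hdiff hlip' (w n) (w (n+1))
    have hstep : w (n+1) - w n = -(η • gradient f (w n)) := by rw [hrec n]; abel
    rw [hstep, inner_neg_right, real_inner_smul_right, real_inner_self_eq_norm_sq,
        norm_neg, norm_smul, Real.norm_eq_abs, abs_of_pos hη0] at h
    nlinarith [h]
  have hlow1 : ∀ n, 1 / (2 * L) * ‖gradient f (w n)‖ ^ 2 ≤ f (w n) - f wstar := by
    intro n
    have h := lower_bound f L hL hconv hdiff hlip' wstar (w n)
    rw [hg0, inner_zero_left, sub_zero, add_zero] at h
    linarith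
  have hcoco : ∀ n, ‖gradient f (w n)‖ ^ 2 / L ≤ ⟪gradient f (w n), w n - wstar⟫ := by
    intro n
    have h := lower_bound f L hL hconv hdiff hlip' (w n) wstar
    rw [hg0, zero_sub, norm_neg,
        show wstar - w n = -(w n - wstar) from (neg_sub _ _).symm, inner_neg_right] at h
    have h1 := hlow1 n
    have hL' : L ≠ 0 := ne_of_gt hL
    have e : ‖gradient f (w n)‖ ^ 2 / L = 1 / (2*L) * ‖gradient f (w n)‖ ^ 2
        + 1 / (2*L) * ‖gradient f (w n)‖ ^ 2 := by field_simp; ring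
    linarith [h, h1, e]
  have hmono : ∀ n, ‖w (n+1) - wstar‖ ≤ ‖w n - wstar‖ := by
    intro n
    have hexp : w (n+1) - wstar = (w n - wstar) - η • gradient f (w n) := by rw [hrec n]; abel
    have hsq : ‖w (n+1) - wstar‖ ^ 2 ≤ ‖w n - wstar‖ ^ 2 := by
      rw [hexp, norm_sub_sq_real, real_inner_smul_right,
          real_inner_comm, norm_smul, Real.norm_eq_abs, abs_of_pos hη0]
      have hco := hcoco n
      have hη2L : η * η ≤ η * (2 / L) := by nlinarith
      have hgL : 0 ≤ ‖gradient f (w n)‖ ^ 2 / L := by positivity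
      have hA := mul_le_mul_of_nonneg_right hη2L (sq_nonneg ‖gradient f (w n)‖)
      have hB := mul_le_mul_of_nonneg_left hco (by positivity : (0:ℝ) ≤ 2 * η)
      have he : η * (2 / L) * ‖gradient f (w n)‖ ^ 2
          = 2 * η * (‖gradient f (w n)‖ ^ 2 / L) := by ring
      rw [he] at hA
      nlinarith [hA, hB]
    nlinarith [hsq, norm_nonneg (w (n+1) - wstar), norm_nonneg (w n - wstar)]
  have hRle : ∀ n, ‖w n - wstar‖ ≤ ‖w 0 - wstar‖ := by
    intro n
    induction n with
    | zero => exact le_refl _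
    | succ n ih => exact (hmono n).trans ih
  have hsub : ∀ n, f (w n) - f wstar ≤ ‖gradient f (w n)‖ * ‖w 0 - wstar‖ := by
    intro n
    have h1 := conv_first_order f hconv hdiff (w n) wstar
    rw [show wstar - w n = -(w n - wstar) from (neg_sub _ _).symm, inner_neg_right] at h1
    have h2 : ⟪gradient f (w n), w n - wstar⟫ ≤ ‖gradient f (w n)‖ * ‖w n - wstar‖ :=
      real_inner_le_norm _ _
    have h3 : ‖gradient f (w n)‖ * ‖w n - wstar‖ ≤ ‖gradient f (w n)‖ * ‖w 0 - wstar‖ :=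
      mul_le_mul_of_nonneg_left (hRle n) (norm_nonneg _)
    linarith
  intro n
  induction n with
  | zero =>
    have h := descent f L hL hdiff hlip' wstar (w 0)
    rw [hg0, inner_zero_left, add_zero] at h
    rw [Nat.cast_zero]
    have he : 2 * L * ‖w 0 - wstar‖ ^ 2 / (4 + 0 * L * η * (2 - L * η))
        = L / 2 * ‖w 0 - wstar‖ ^ 2 := by ring
    rw [he]
    linarith
  | succ n ih =>
    have hd := hdesc n
    by_cases hR0 : ‖w 0 - wstar‖ = 0
    · have h1 := hsub n
      rw [hR0, mul_zero] at h1
      have hdenpos : 0 < 4 + ((n:ℝ)+1) * L * η * (2 - L * η) := by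
        have : 0 ≤ ((n:ℝ)+1) * L * η * (2 - L * η) := by
          apply mul_nonneg (mul_nonneg (mul_nonneg _ hL.le) hη0.le) h2Lη.le
          positivity
        linarith
      rw [hR0]
      push_cast
      have hz : 2 * L * (0:ℝ) ^ 2 / (4 + ((n:ℝ)+1) * L * η * (2 - L * η)) = 0 := by
        rw [div_eq_zero_iff]; left; ring
      rw [hz]
      nlinarith [hd, h1, mul_nonneg hc.le (sq_nonneg ‖gradient f (w n)‖)]
    · have hR2 : 0 < ‖w 0 - wstar‖ ^ 2 := by positivity
      have hD : (4:ℝ) ≤ 4 + (n:ℝ) * L * η * (2 - L * η) := by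
        have : 0 ≤ (n:ℝ) * L * η * (2 - L * η) := by
          apply mul_nonneg (mul_nonneg (mul_nonneg _ hL.le) hη0.le) h2Lη.le
          positivity
        linarith
      have hG2 : (f (w n) - f wstar) ^ 2 / ‖w 0 - wstar‖ ^ 2 ≤ ‖gradient f (w n)‖ ^ 2 := by
        rw [div_le_iff₀ hR2]
        nlinarith [hsub n, hδ0 n, norm_nonneg (gradient f (w n)), norm_nonneg (w 0 - wstar)]
      have hrec' : f (w (n+1)) - f wstar ≤ (f (w n) - f wstar)
          - (η * (2 - L * η) / 2) * (f (w n) - f wstar) ^ 2 / ‖w 0 - wstar‖ ^ 2 := by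
        have h2 : (η * (2 - L * η) / 2) * ((f (w n) - f wstar) ^ 2 / ‖w 0 - wstar‖ ^ 2)
            ≤ (η * (2 - L * η) / 2) * ‖gradient f (w n)‖ ^ 2 :=
          mul_le_mul_of_nonneg_left hG2 hc.le
        rw [mul_div_assoc]
        linarith [hd, h2]
      have hkey := step_arith L η (f (w n) - f wstar) (f (w (n+1)) - f wstar)
        (‖w 0 - wstar‖ ^ 2) (4 + (n:ℝ) * L * η * (2 - L * η)) hL hη0 hηL hR2 hD
        (hδ0 (n+1)) (hδ0 n) hrec' ih
      push_cast
      have hgoal : 4 + ((n:ℝ)+1) * L * η * (2 - L * η)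
          = (4 + (n:ℝ) * L * η * (2 - L * η)) + L * η * (2 - L * η) := by ring
      rw [hgoal]
      exact hkey
end
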